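/- arXiv:1911.03265 — 3 statements merged into one kernel-verified Lean document; each statement's English description precedes it below -/
import Mathlib

section
/- Assume packet losses are i.i.d. Bernoulli with parameter p. For every natural number i with 0 < i ≤ K, Q(i) = C(N, i) · p^i · (1-p)^{N-i} · Σ_{j=0}^{i-1} C(K, K-j) · p^{K-j} · (1-p)^{j}. -/
/-- The media block `B`: the first `N` of the `N + K` packet indices. -/
def mediaB (N K : ℕ) : Finset (Fin (N + K)) :=
  Finset.univ.filter (fun i => (i : ℕ) < N)

/-- `U(S)`: the number of unrecoverable losses among the media packets when the set
of packets lost in the network is `S`. Erasure coding recovers everything iff at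
most `K` packets are lost. -/
def unrec (N K : ℕ) (S : Finset (Fin (N + K))) : ℕ :=
  if K < S.card then (S ∩ mediaB N K).card else 0

/-- `Q m`: the probability (under i.i.d. Bernoulli(p) network losses) that exactly
`m` unrecoverable losses remain in the block. -/
noncomputable def Q (N K : ℕ) (p : ℝ) (m : ℕ) : ℝ :=
  ∑ S ∈ Finset.univ.filter (fun S : Finset (Fin (N + K)) => unrec N K S = m),
    p ^ S.card * (1 - p) ^ (N + K - S.card)

open Finset

lemma cardB (N K : ℕ) : (mediaB N K).card = N := by
  have h : mediaB N K = (Finset.univ : Finset (Fin N)).map (Fin.castAddEmb K) := by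
    ext x
    simp only [mediaB, mem_filter, mem_univ, true_and, mem_map, Fin.castAddEmb,
      Function.Embedding.coeFn_mk]
    constructor
    · intro h; exact ⟨⟨x, h⟩, by simp [Fin.castAdd, Fin.ext_iff]⟩
    · rintro ⟨y, rfl⟩; simp [Fin.castAdd]
  rw [h, card_map, card_univ, Fintype.card_fin]

lemma cardBc (N K : ℕ) : (mediaB N K)ᶜ.card = K := by
  rw [card_compl, cardB]; simp

lemma union_inter_eqs {α : Type*} [Fintype α] [DecidableEq α] {B T U : Finset α}
    (hT : T ⊆ B) (hU : U ⊆ Bᶜ) : (T ∪ U) ∩ B = T ∧ (T ∪ U) ∩ Bᶜ = U := by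
  have h1 : U ∩ B = ∅ := by
    ext x; simp only [mem_inter, notMem_empty, iff_false]
    rintro ⟨hx, hxB⟩; exact (mem_compl.mp (hU hx)) hxB
  have h2 : T ∩ Bᶜ = ∅ := by
    ext x; simp only [mem_inter, notMem_empty, iff_false]
    rintro ⟨hx, hxB⟩; exact (mem_compl.mp hxB) (hT hx)
  constructor
  · rw [union_inter_distrib_right, inter_eq_left.mpr hT, h1, union_empty]
  · rw [union_inter_distrib_right, inter_eq_left.mpr hU, h2, empty_union]

lemma fiber_card (N K b a : ℕ) :
    (Finset.univ.filter fun S : Finset (Fin (N + K)) =>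
      (S ∩ mediaB N K).card = b ∧ (S ∩ (mediaB N K)ᶜ).card = a).card
      = N.choose b * K.choose a := by
  set B := mediaB N K with hB
  have key : (Finset.univ.filter fun S : Finset (Fin (N + K)) =>
      (S ∩ B).card = b ∧ (S ∩ Bᶜ).card = a).card
      = (B.powersetCard b ×ˢ Bᶜ.powersetCard a).card := by
    apply Finset.card_nbij'
      (i := fun S => (S ∩ B, S ∩ Bᶜ))
      (j := fun pr => pr.1 ∪ pr.2)
    · intro S hS
      simp only [mem_coe, mem_filter] at hS
      simp [mem_product, mem_powersetCard, inter_subset_right, hS.2.1, hS.2.2]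
    · rintro ⟨T, U⟩ h
      simp only [mem_coe, mem_product, mem_powersetCard] at h
      obtain ⟨⟨hT, hTc⟩, hU, hUc⟩ := h
      obtain ⟨e1, e2⟩ := union_inter_eqs hT hU
      simp [e1, e2, hTc, hUc]
    · intro S _
      simp only
      rw [← inter_union_distrib_left, union_compl, inter_univ]
    · rintro ⟨T, U⟩ h
      simp only [mem_coe, mem_product, mem_powersetCard] at h
      obtain ⟨⟨hT, _⟩, hU, _⟩ := h
      obtain ⟨e1, e2⟩ := union_inter_eqs hT hU
      simp [e1, e2]
  rw [key, card_product, card_powersetCard, card_powersetCard, cardB, cardBc]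

theorem stmt_1 (N K : ℕ) (p : ℝ) (hp0 : 0 ≤ p) (hp1 : p ≤ 1)
    (i : ℕ) (hi : 0 < i) (hiK : i ≤ K) :
    Q N K p i =
      (N.choose i : ℝ) * p ^ i * (1 - p) ^ (N - i) *
        ∑ j ∈ Finset.range i,
          (K.choose (K - j) : ℝ) * p ^ (K - j) * (1 - p) ^ j := by
  classical
  set B := mediaB N K with hB
  have hsplit : ∀ S : Finset (Fin (N + K)), S.card = (S ∩ B).card + (S ∩ Bᶜ).card := by
    intro S
    have : S ∩ Bᶜ = S \ B := by rw [sdiff_eq, inf_eq_inter]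
    rw [this, card_inter_add_card_sdiff]
  have haK : ∀ S : Finset (Fin (N + K)), (S ∩ Bᶜ).card ≤ K := by
    intro S
    calc (S ∩ Bᶜ).card ≤ Bᶜ.card := card_le_card inter_subset_right
    _ = K := cardBc N K
  have hfilter : (Finset.univ.filter fun S : Finset (Fin (N + K)) => unrec N K S = i)
      = (Finset.range i).biUnion (fun j => Finset.univ.filter fun S =>
          (S ∩ B).card = i ∧ (S ∩ Bᶜ).card = K - j) := by
    ext S
    simp only [mem_filter, mem_univ, true_and, mem_biUnion, mem_range, unrec, ← hB]
    have hs := hsplit S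
    have ha := haK S
    constructor
    · intro h
      by_cases hc : K < S.card
      · rw [if_pos hc] at h
        refine ⟨K - (S ∩ Bᶜ).card, by omega, h, by omega⟩
      · rw [if_neg hc] at h; omega
    · rintro ⟨j, hj, hb, hja⟩
      have hc : K < S.card := by omega
      rw [if_pos hc]; exact hb
  have hdisj : (↑(Finset.range i) : Set ℕ).PairwiseDisjoint
      (fun j => Finset.univ.filter fun S : Finset (Fin (N + K)) =>
        (S ∩ B).card = i ∧ (S ∩ Bᶜ).card = K - j) := by
    intro j hj j' hj' hne
    simp only [Finset.coe_range, Set.mem_Iio] at hj hj'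
    simp only [Function.onFun, Finset.disjoint_left]
    intro S hS hS'
    simp only [mem_filter] at hS hS'
    omega
  rw [Q, hfilter, sum_biUnion hdisj]
  rw [Finset.mul_sum]
  apply Finset.sum_congr rfl
  intro j hj
  simp only [mem_range] at hj
  have hsum : ∑ S ∈ Finset.univ.filter (fun S : Finset (Fin (N + K)) =>
        (S ∩ B).card = i ∧ (S ∩ Bᶜ).card = K - j),
      p ^ S.card * (1 - p) ^ (N + K - S.card)
      = ∑ S ∈ Finset.univ.filter (fun S : Finset (Fin (N + K)) =>
        (S ∩ B).card = i ∧ (S ∩ Bᶜ).card = K - j),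
      p ^ i * p ^ (K - j) * ((1 - p) ^ (N - i) * (1 - p) ^ j) := by
    apply Finset.sum_congr rfl
    intro S hS
    simp only [mem_filter] at hS
    obtain ⟨_, hb, ha⟩ := hS
    have hiN : i ≤ N := by
      calc i = (S ∩ B).card := hb.symm
      _ ≤ B.card := card_le_card inter_subset_right
      _ = N := cardB N K
    have hc : S.card = i + (K - j) := by rw [hsplit S, hb, ha]
    have he : N + K - (i + (K - j)) = (N - i) + j := by omega
    rw [hc, he, pow_add, pow_add]
  rw [hsum, Finset.sum_const, fiber_card N K i (K - j)]
  push_cast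
  ring
end

section
/- Let N ≥ 1, j ≥ 1, let a_1, …, a_j be positive natural numbers, and let s, e ∈ {0,1} satisfy s + (a_1 + ⋯ + a_j) + (j−1) + e ≤ N. Then the probability under the post-erasure distribution that a block's loss vector equals (s, a_1, …, a_j, e) is P(s, a_1, …, a_j, e) = multichoose(j + 1 − (1−s) − (1−e), N − (a_1 + ⋯ + a_j) − (j−1) − s − e) · Q(a_1 + ⋯ + a_j) / C(N, a_1 + ⋯ + a_j). -/
/-- Auxiliary function: `rowLengthsAux l n` computes the lengths of the maximal runs of
`true` in `l`, assuming a run of `true`s of length `n` is currently in progress. -/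
def rowLengthsAux : List Bool → ℕ → List ℕ
  | [], 0 => []
  | [], n + 1 => [n + 1]
  | true :: t, n => rowLengthsAux t (n + 1)
  | false :: t, 0 => rowLengthsAux t 0
  | false :: t, n + 1 => (n + 1) :: rowLengthsAux t 0

/-- The lengths, in order, of the maximal runs of consecutive `true` entries (loss rows). -/
def rowLengths (l : List Bool) : List ℕ := rowLengthsAux l 0

/-- The number of loss rows (maximal runs of consecutive `true` entries) of `l`. -/
def runs (l : List Bool) : ℕ := (rowLengths l).length

/-- The loss vector `(s, (a₁, …, a_j), e)` of a block pattern: `a₁, …, a_j` are the lengths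
of the loss rows in order, `s = 0` iff the first packet is lost, `e = 0` iff the last
packet is lost. -/
def lossVector (l : List Bool) : ℕ × List ℕ × ℕ :=
  ((if l.head? = some true then 0 else 1),
    rowLengths l,
    (if l.getLast? = some true then 0 else 1))

namespace SB

def chunk (p : ℕ × ℕ) : List Bool := List.replicate p.1 true ++ List.replicate p.2 false

def body (t : List (ℕ × ℕ)) : List Bool := (t.map chunk).flatten

def build (g0 : ℕ) (t : List (ℕ × ℕ)) : List Bool := List.replicate g0 false ++ body t

@[simp] lemma body_nil : body [] = [] := rfl

lemma body_cons (p : ℕ × ℕ) (t : List (ℕ × ℕ)) :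
    body (p :: t) = List.replicate p.1 true ++ List.replicate p.2 false ++ body t := by
  simp [body, chunk, List.append_assoc]

lemma aux_false_prefix (g : ℕ) (l : List Bool) :
    rowLengthsAux (List.replicate g false ++ l) 0 = rowLengthsAux l 0 := by
  induction g with
  | zero => rfl
  | succ n ih => simpa [List.replicate_succ, rowLengthsAux] using ih

lemma aux_true_prefix (r : ℕ) (l : List Bool) : ∀ n,
    rowLengthsAux (List.replicate r true ++ l) n = rowLengthsAux l (n + r) := by
  induction r with
  | zero => intro n; rfl
  | succ m ih =>
    intro n
    show rowLengthsAux (true :: (List.replicate m true ++ l)) n = _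
    rw [rowLengthsAux, ih (n+1)]; ring_nf

lemma aux_rep_false (g n : ℕ) :
    rowLengthsAux (List.replicate g false) (n + 1) = [n + 1] := by
  cases g with
  | zero => rfl
  | succ m =>
    simp only [List.replicate_succ, rowLengthsAux]
    have : rowLengthsAux (List.replicate m false) 0 = [] := by
      simpa [rowLengthsAux] using aux_false_prefix m []
    rw [this]

lemma body_rowLengths : ∀ t : List (ℕ × ℕ), (∀ p ∈ t, 0 < p.1) → (∀ p ∈ t.dropLast, 0 < p.2) →
    rowLengthsAux (body t) 0 = t.map Prod.fst := by
  intro t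
  induction t with
  | nil => intro _ _; rfl
  | cons p t ih =>
    intro hr hg
    obtain ⟨r, g⟩ := p
    have hr1 : 0 < r := hr (r, g) (by simp)
    obtain ⟨r', rfl⟩ : ∃ r', r = r' + 1 := ⟨r - 1, by omega⟩
    rw [body_cons, List.append_assoc, aux_true_prefix, zero_add]
    cases t with
    | nil =>
      rw [body_nil, List.append_nil, aux_rep_false]
      rfl
    | cons q t' =>
      have hg1 : 0 < g := hg (r'+1, g) (by simp [List.dropLast])
      obtain ⟨g', rfl⟩ : ∃ g', g = g' + 1 := ⟨g - 1, by omega⟩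
      show (r' + 1) :: rowLengthsAux (List.replicate g' false ++ body (q :: t')) 0 = _
      rw [aux_false_prefix]
      have := ih (fun p hp => hr p (List.mem_cons_of_mem _ hp))
        (fun p hp => hg p (by
          rw [List.dropLast_cons_of_ne_nil (by simp)]
          exact List.mem_cons_of_mem _ hp))
      rw [this]
      rfl

lemma rowLengths_build (g0 : ℕ) (t : List (ℕ × ℕ)) (hr : ∀ p ∈ t, 0 < p.1)
    (hg : ∀ p ∈ t.dropLast, 0 < p.2) :
    rowLengths (build g0 t) = t.map Prod.fst := by
  rw [rowLengths, build, aux_false_prefix, body_rowLengths t hr hg]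

end SB

namespace SB

lemma aux_sum : ∀ (l : List Bool) (n : ℕ), (rowLengthsAux l n).sum = l.count true + n := by
  intro l
  induction l with
  | nil => intro n; cases n <;> simp [rowLengthsAux]
  | cons b t ih =>
    intro n
    cases b with
    | true => rw [rowLengthsAux, ih]; simp [List.count_cons]; omega
    | false =>
      cases n with
      | zero => rw [rowLengthsAux, ih]; simp [List.count_cons]
      | succ m =>
        rw [rowLengthsAux]
        simp only [List.sum_cons, ih, List.count_cons]
        simp; omega

lemma sum_rowLengths (l : List Bool) : (rowLengths l).sum = l.count true := by
  simpa [rowLengths] using aux_sum l 0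

lemma body_append (t₁ t₂ : List (ℕ × ℕ)) : body (t₁ ++ t₂) = body t₁ ++ body t₂ := by
  simp [body]

lemma length_body (t : List (ℕ × ℕ)) :
    (body t).length = (t.map (fun p => p.1 + p.2)).sum := by
  induction t with
  | nil => rfl
  | cons p t ih => rw [body_cons]; simp [ih]; omega

lemma length_build (g0 : ℕ) (t : List (ℕ × ℕ)) :
    (build g0 t).length = g0 + (t.map (fun p => p.1 + p.2)).sum := by
  simp [build, length_body]

lemma head?_body (t : List (ℕ × ℕ)) (ht : t ≠ []) (hr : ∀ p ∈ t, 0 < p.1) :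
    (body t).head? = some true := by
  cases t with
  | nil => exact absurd rfl ht
  | cons p t' =>
    have := hr p (by simp)
    obtain ⟨r, hrr⟩ : ∃ r, p.1 = r + 1 := ⟨p.1 - 1, by omega⟩
    rw [body_cons, hrr, List.replicate_succ]
    rfl

lemma body_eq_nil (t : List (ℕ × ℕ)) (hr : ∀ p ∈ t, 0 < p.1) (h : body t = []) : t = [] := by
  by_contra ht
  have := head?_body t ht hr
  rw [h] at this
  simp at this

lemma head?_build_pos (g0 : ℕ) (t : List (ℕ × ℕ)) (h : 0 < g0) :
    (build g0 t).head? = some false := by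
  obtain ⟨g, rfl⟩ : ∃ g, g0 = g + 1 := ⟨g0 - 1, by omega⟩
  rw [build, List.replicate_succ]
  rfl

lemma getLast?_append_rep (l : List Bool) (n : ℕ) (b : Bool) :
    (l ++ List.replicate (n + 1) b).getLast? = some b := by
  rw [List.replicate_succ', ← List.append_assoc]
  exact List.getLast?_concat

lemma rep_cancel (b : Bool) : ∀ (g g' : ℕ) (x y : List Bool),
    (x = [] ∨ x.head? = some (!b)) → (y = [] ∨ y.head? = some (!b)) →
    List.replicate g b ++ x = List.replicate g' b ++ y → g = g' ∧ x = y := by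
  intro g
  induction g with
  | zero =>
    intro g' x y hx hy h
    cases g' with
    | zero => simpa using h
    | succ m =>
      exfalso
      rw [List.replicate_succ] at h
      simp only [List.replicate_zero, List.nil_append, List.cons_append] at h
      rcases hx with hx | hx
      · rw [hx] at h; exact absurd h.symm (by simp)
      · rw [h] at hx; simp at hx
  | succ m ih =>
    intro g' x y hx hy h
    cases g' with
    | zero =>
      exfalso
      rw [List.replicate_succ] at h
      simp only [List.replicate_zero, List.nil_append, List.cons_append] at h
      rcases hy with hy | hy
      · rw [hy] at h; exact absurd h (by simp)
      · rw [← h] at hy; simp at hy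
    | succ k =>
      rw [List.replicate_succ, List.replicate_succ] at h
      simp only [List.cons_append, List.cons.injEq, true_and] at h
      obtain ⟨h1, h2⟩ := ih k x y hx hy h
      exact ⟨by omega, h2⟩

lemma body_head_cond (t : List (ℕ × ℕ)) (hr : ∀ p ∈ t, 0 < p.1) :
    body t = [] ∨ (body t).head? = some (!false) := by
  cases t with
  | nil => left; rfl
  | cons p t' => right; simpa using head?_body _ (by simp) hr

lemma body_inj : ∀ (t t' : List (ℕ × ℕ)),
    (∀ p ∈ t, 0 < p.1) → (∀ p ∈ t', 0 < p.1) →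
    (∀ p ∈ t.dropLast, 0 < p.2) → (∀ p ∈ t'.dropLast, 0 < p.2) →
    t.map Prod.fst = t'.map Prod.fst → body t = body t' → t = t' := by
  intro t
  induction t with
  | nil =>
    intro t' _ _ _ _ hm _
    simpa using (List.map_eq_nil_iff.mp hm.symm)
  | cons p t₂ ih =>
    intro t' hr hr' hg hg' hm hb
    cases t' with
    | nil => simp at hm
    | cons q t₂' =>
      simp only [List.map_cons, List.cons.injEq] at hm
      obtain ⟨hfst, hm2⟩ := hm
      rw [body_cons, body_cons, ← hfst, List.append_assoc, List.append_assoc] at hb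
      have hb2 := List.append_cancel_left hb
      have hcan := rep_cancel false p.2 q.2 (body t₂) (body t₂')
        (body_head_cond t₂ (fun x hx => hr x (List.mem_cons_of_mem _ hx)))
        (body_head_cond t₂' (fun x hx => hr' x (List.mem_cons_of_mem _ hx))) hb2
      obtain ⟨hsnd, hb3⟩ := hcan
      have hgs : ∀ x ∈ t₂.dropLast, 0 < x.2 := by
        intro x hx
        cases t₂ with
        | nil => simp at hx
        | cons u v =>
          refine hg x ?_
          rw [List.dropLast_cons_of_ne_nil (by simp)]
          exact List.mem_cons_of_mem _ hx
      have hgs' : ∀ x ∈ t₂'.dropLast, 0 < x.2 := by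
        intro x hx
        cases t₂' with
        | nil => simp at hx
        | cons u v =>
          refine hg' x ?_
          rw [List.dropLast_cons_of_ne_nil (by simp)]
          exact List.mem_cons_of_mem _ hx
      have ht2 : t₂ = t₂' :=
        ih t₂' (fun x hx => hr x (List.mem_cons_of_mem _ hx))
          (fun x hx => hr' x (List.mem_cons_of_mem _ hx)) hgs hgs' hm2 hb3
      rw [ht2, Prod.ext hfst hsnd]

lemma build_inj (g0 g0' : ℕ) (t t' : List (ℕ × ℕ))
    (hr : ∀ p ∈ t, 0 < p.1) (hr' : ∀ p ∈ t', 0 < p.1)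
    (hg : ∀ p ∈ t.dropLast, 0 < p.2) (hg' : ∀ p ∈ t'.dropLast, 0 < p.2)
    (hm : t.map Prod.fst = t'.map Prod.fst) (h : build g0 t = build g0' t') :
    g0 = g0' ∧ t = t' := by
  obtain ⟨h1, h2⟩ := rep_cancel false g0 g0' (body t) (body t')
    (body_head_cond t hr) (body_head_cond t' hr') h
  exact ⟨h1, body_inj t t' hr hr' hg hg' hm h2⟩

lemma exists_decomp : ∀ l : List Bool, ∃ g0 t, (∀ p ∈ t, 0 < p.1) ∧
    (∀ p ∈ t.dropLast, 0 < p.2) ∧ l = build g0 t := by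
  intro l
  induction l with
  | nil => exact ⟨0, [], by simp, by simp, rfl⟩
  | cons b l' ih =>
    obtain ⟨g1, t1, hr1, hg1, hl1⟩ := ih
    cases b with
    | false =>
      refine ⟨g1 + 1, t1, hr1, hg1, ?_⟩
      rw [hl1, build, build, List.replicate_succ, List.cons_append]
    | true =>
      cases t1 with
      | nil =>
        -- l' = replicate g1 false
        refine ⟨0, [(1, g1)], by simp, by simp, ?_⟩
        rw [hl1]
        simp [build, body, chunk, List.replicate_succ]
      | cons p t2 =>
        cases g1 with
        | zero =>
          refine ⟨0, (p.1 + 1, p.2) :: t2, ?_, ?_, ?_⟩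
          · intro x hx
            rcases List.mem_cons.mp hx with h | h
            · rw [h]; simp
            · exact hr1 x (List.mem_cons_of_mem _ h)
          · intro x hx
            cases t2 with
            | nil => simp at hx
            | cons u v =>
              rw [List.dropLast_cons_of_ne_nil (by simp)] at hx
              rcases List.mem_cons.mp hx with h | h
              · rw [h]
                exact hg1 ((p.1, p.2)) (by
                  rw [List.dropLast_cons_of_ne_nil (by simp)]; simp)
              · exact hg1 x (by
                  rw [List.dropLast_cons_of_ne_nil (by simp)]
                  exact List.mem_cons_of_mem _ h)
          · rw [hl1]
            simp only [build, List.replicate_zero, List.nil_append, body_cons]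
            rw [List.replicate_succ]
            rfl
        | succ g1' =>
          refine ⟨0, (1, g1' + 1) :: (p :: t2), ?_, ?_, ?_⟩
          · intro x hx
            rcases List.mem_cons.mp hx with h | h
            · rw [h]; simp
            · exact hr1 x h
          · intro x hx
            rw [List.dropLast_cons_of_ne_nil (by simp)] at hx
            rcases List.mem_cons.mp hx with h | h
            · rw [h]; simp
            · exact hg1 x h
          · rw [hl1]
            simp only [build, List.replicate_zero, List.nil_append, body_cons]
            simp [List.replicate_succ]

end SB

namespace SB

lemma lossVector_build (g0 : ℕ) (t₁ : List (ℕ × ℕ)) (r g : ℕ)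
    (hr : ∀ p ∈ t₁ ++ [(r, g)], 0 < p.1) (hg : ∀ p ∈ (t₁ ++ [(r, g)]).dropLast, 0 < p.2) :
    lossVector (build g0 (t₁ ++ [(r, g)])) =
      ((if g0 = 0 then 0 else 1), (t₁ ++ [(r, g)]).map Prod.fst, (if g = 0 then 0 else 1)) := by
  have hne : (t₁ ++ [(r, g)] : List (ℕ × ℕ)) ≠ [] := by simp
  have hhead : (build g0 (t₁ ++ [(r, g)])).head? = (if g0 = 0 then some true else some false) := by
    split
    · next h => rw [h, build, List.replicate_zero, List.nil_append]
                exact head?_body _ hne hr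
    · next h => exact head?_build_pos _ _ (by omega)
  have hlast : (build g0 (t₁ ++ [(r, g)])).getLast? =
      (if g = 0 then some true else some false) := by
    have hb : build g0 (t₁ ++ [(r, g)]) =
        (List.replicate g0 false ++ body t₁ ++ List.replicate r true) ++ List.replicate g false := by
      rw [build, body_append]
      simp [body, chunk, List.append_assoc]
    split
    · next h =>
      subst h
      have hrpos : 0 < r := hr (r, 0) (by simp)
      obtain ⟨r', rfl⟩ : ∃ r', r = r' + 1 := ⟨r - 1, by omega⟩
      rw [hb]
      simp only [List.replicate_zero, List.append_nil]
      exact getLast?_append_rep _ _ _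
    · next h =>
      obtain ⟨g', rfl⟩ : ∃ g', g = g' + 1 := ⟨g - 1, by omega⟩
      rw [hb]
      exact getLast?_append_rep _ _ _
  rw [lossVector, rowLengths_build _ _ hr hg, hhead, hlast]
  simp only [Prod.mk.injEq]
  refine ⟨?_, ?_, ?_⟩ <;> first | trivial | (split <;> simp)

lemma card_piAntidiag {ι : Type*} [DecidableEq ι] (s : Finset ι) (n : ℕ) :
    (Finset.piAntidiag s n).card = Nat.multichoose s.card n := by
  classical
  rw [← Finset.map_sym_eq_piAntidiag, Finset.card_map]
  have h1 : Fintype.card (Sym {x // x ∈ s} n) = Nat.multichoose s.card n := by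
    rw [Sym.card_sym_eq_multichoose]
    congr 1
    exact Fintype.card_coe s
  rw [← h1, Fintype.card]
  rw [← Finset.card_map ⟨Sym.map Subtype.val, Sym.map_injective Subtype.val_injective n⟩]
  congr 1
  ext m
  simp only [Finset.mem_map, Finset.mem_univ, true_and, Function.Embedding.coeFn_mk]
  constructor
  · intro hm
    rw [Finset.mem_sym_iff] at hm
    refine ⟨m.attach.map (fun x => (⟨x.1, hm x.1 x.2⟩ : {x // x ∈ s})), ?_⟩
    rw [Sym.map_map]
    exact m.attach_map_coe
  · rintro ⟨m', rfl⟩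
    rw [Finset.mem_sym_iff]
    intro a ha
    rw [Sym.mem_map] at ha
    obtain ⟨b, _, rfl⟩ := ha
    exact b.2

end SB


namespace SB

lemma lossVector_build2 (g0 : ℕ) (t : List (ℕ × ℕ)) (r g : ℕ)
    (hlast : t.getLast? = some (r, g))
    (hr : ∀ p ∈ t, 0 < p.1) (hg : ∀ p ∈ t.dropLast, 0 < p.2) :
    lossVector (build g0 t) =
      ((if g0 = 0 then 0 else 1), t.map Prod.fst, (if g = 0 then 0 else 1)) := by
  have ht : t ≠ [] := by rintro rfl; simp at hlast
  obtain ⟨t₁, q, rfl⟩ := (List.eq_nil_or_concat t).resolve_left ht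
  rw [List.concat_eq_append] at *
  rw [List.getLast?_concat, Option.some.injEq] at hlast
  subst hlast
  exact lossVector_build g0 t₁ r g hr hg

lemma ofFn_getD {α : Type*} (N : ℕ) (l : List α) (d : α) (h : l.length = N) :
    List.ofFn (fun i : Fin N => l.getD i d) = l := by
  apply List.ext_getElem
  · simp [h]
  · intro i h1 h2
    simp only [List.getElem_ofFn]
    exact List.getD_eq_getElem l d h2

end SB


namespace SB
lemma sum_map_add (t : List (ℕ × ℕ)) :
    (t.map (fun q : ℕ × ℕ => q.1 + q.2)).sum = (t.map Prod.fst).sum + (t.map Prod.snd).sum := by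
  induction t with
  | nil => rfl
  | cons p t ih => simp [ih]; omega
end SB


namespace SB
lemma getLast?_ofFn' {α : Type*} (m : ℕ) (h : 0 < m) (f : Fin m → α) :
    (List.ofFn f).getLast? = some (f ⟨m - 1, by omega⟩) := by
  rw [List.getLast?_eq_getElem?, List.getElem?_eq_getElem (by simp; omega)]
  congr 1
  rw [List.getElem_ofFn]
  congr 1
  ext
  simp
end SB

theorem stmt_6 (N K : ℕ) (p : ℝ) (hp0 : 0 ≤ p) (hp1 : p ≤ 1)
    (j : ℕ) (hN : 1 ≤ N) (hj : 1 ≤ j)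
    (a : List ℕ) (hlen : a.length = j) (hpos : ∀ x ∈ a, 0 < x)
    (s e : ℕ) (hs : s ≤ 1) (he : e ≤ 1)
    (hle : s + a.sum + (j - 1) + e ≤ N) :
    ∑ f ∈ Finset.univ.filter (fun f : Fin N → Bool => lossVector (List.ofFn f) = (s, a, e)),
      Q N K p ((List.ofFn f).count true) / ((N.choose ((List.ofFn f).count true)) : ℝ)
    = (Nat.multichoose (j + 1 - (1 - s) - (1 - e)) (N - a.sum - (j - 1) - s - e) : ℝ) *
        Q N K p a.sum / ((N.choose a.sum) : ℝ) := by
  classical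
  subst hlen
  set L := a.length with hL
  set n := N - a.sum - (L - 1) - s - e with hn
  set Fil := Finset.univ.filter (fun f : Fin N → Bool => lossVector (List.ofFn f) = (s, a, e))
    with hFil
  -- the constant offsets
  set cf : Fin (L + 1) → ℕ :=
    (fun i => if (i : ℕ) = 0 then s else if (i : ℕ) = L then e else 1) with hcf
  have hL1 : 1 ≤ L := hj
  have hcsum : ∑ i, cf i = s + e + (L - 1) := by
    rw [Fin.sum_univ_succ]
    have h0 : cf 0 = s := by simp [hcf]
    have hsucc : ∀ i : Fin L, cf i.succ = if i = ⟨L - 1, by omega⟩ then e else 1 := by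
      intro i
      simp only [hcf, Fin.val_succ]
      have : ¬ ((i : ℕ) + 1 = 0) := by omega
      rw [if_neg this]
      by_cases h : (i : ℕ) + 1 = L
      · rw [if_pos h, if_pos (by ext; simp; omega)]
      · rw [if_neg h, if_neg (by intro hh; apply h; rw [hh]; simp; omega)]
    rw [h0]
    rw [Finset.sum_congr rfl (fun i _ => hsucc i)]
    rw [← Finset.add_sum_erase _ _ (Finset.mem_univ (⟨L - 1, by omega⟩ : Fin L))]
    rw [if_pos rfl]
    rw [Finset.sum_congr rfl (fun i hi => if_neg (Finset.mem_erase.mp hi).1)]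
    simp [Finset.card_erase_of_mem]
    omega
  -- the free-coordinate set
  set F : Finset (Fin (L + 1)) := Finset.univ.filter
      (fun i => ((i : ℕ) = 0 → s = 1) ∧ ((i : ℕ) = L → e = 1)) with hF
  have hcF : F.card = s + e + (L - 1) := by
    rw [hF, Finset.card_filter, ← hcsum]
    refine Finset.sum_congr rfl (fun i _ => ?_)
    by_cases h0 : (i : ℕ) = 0
    · have hLL : (i : ℕ) ≠ L := by omega
      rcases Nat.le_one_iff_eq_zero_or_eq_one.mp hs with rfl | rfl <;>
        simp [hcf, h0, hLL, show (0:ℕ) ≠ L by omega, show L ≠ 0 by omega, (Fin.ext (by simp [h0]) : i = 0)]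
    · by_cases hLL : (i : ℕ) = L
      · rcases Nat.le_one_iff_eq_zero_or_eq_one.mp he with rfl | rfl <;>
          simp [hcf, h0, hLL, show (0:ℕ) ≠ L by omega, show L ≠ 0 by omega] <;>
            intro h <;> subst h <;> simp at h0
      · simp [hcf, h0, hLL]
        intro h; subst h; simp at h0
  -- the encoding map
  set bd : (Fin (L + 1) → ℕ) → List Bool := fun z =>
    SB.build (z 0 + cf 0) (List.ofFn (fun i : Fin L => (a.get i, z i.succ + cf i.succ))) with hbd
  set enc : (Fin (L + 1) → ℕ) → (Fin N → Bool) := fun z i => (bd z).getD i false with henc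
  have hget0 : ((0 : Fin (L + 1)) : ℕ) = 0 := rfl
  have hcf0 : cf 0 = s := by simp [hcf]
  have hcflast : cf (Fin.last L) = e := by simp [hcf]; omega
  have hasum : ∑ i : Fin L, a.get i = a.sum := by
    conv_rhs => rw [← List.ofFn_get a]
    rw [List.sum_ofFn]
  have hrows : ∀ z : Fin (L + 1) → ℕ,
      ∀ q ∈ List.ofFn (fun i : Fin L => (a.get i, z i.succ + cf i.succ)), 0 < q.1 := by
    intro z q hq
    rw [List.mem_ofFn] at hq
    obtain ⟨i, rfl⟩ := hq
    exact hpos _ (List.get_mem a i)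
  have hgaps : ∀ z : Fin (L + 1) → ℕ,
      ∀ q ∈ (List.ofFn (fun i : Fin L => (a.get i, z i.succ + cf i.succ))).dropLast, 0 < q.2 := by
    intro z q hq
    rw [List.mem_iff_getElem] at hq
    obtain ⟨i, hi, hqe⟩ := hq
    rw [List.getElem_dropLast, List.getElem_ofFn] at hqe
    have hi' : i < L - 1 := by simpa using hi
    subst hqe
    simp only [hcf, Fin.val_succ, Fin.val_mk]
    rw [if_neg (by omega), if_neg (by omega)]
    omega
  have hmapfst : ∀ z : Fin (L + 1) → ℕ,
      (List.ofFn (fun i : Fin L => (a.get i, z i.succ + cf i.succ))).map Prod.fst = a := by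
    intro z
    rw [List.map_ofFn]
    exact List.ofFn_get a
  have hlenbd : ∀ z : Fin (L + 1) → ℕ, (bd z).length = ∑ i, z i + ∑ i, cf i + a.sum := by
    intro z
    rw [hbd]
    simp only
    rw [SB.length_build, List.map_ofFn, List.sum_ofFn]
    rw [Fin.sum_univ_succ (f := z), Fin.sum_univ_succ (f := cf)]
    have : ∑ i : Fin L, (Function.comp (fun q : ℕ × ℕ => q.1 + q.2)
        (fun i : Fin L => (a.get i, z i.succ + cf i.succ))) i
        = ∑ i : Fin L, (a.get i + (z i.succ + cf i.succ)) := rfl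
    rw [this, Finset.sum_add_distrib, Finset.sum_add_distrib, hasum]
    ring
  have hlast_ofFn : ∀ z : Fin (L + 1) → ℕ,
      (List.ofFn (fun i : Fin L => (a.get i, z i.succ + cf i.succ))).getLast?
        = some (a.get ⟨L - 1, by omega⟩, z (Fin.last L) + cf (Fin.last L)) := by
    intro z
    rw [SB.getLast?_ofFn' L (by omega)]
    have hsucc_eq : ((⟨L - 1, by omega⟩ : Fin L)).succ = Fin.last L := by
      ext; simp; omega
    rw [hsucc_eq]
  have hlv_bd : ∀ z : Fin (L + 1) → ℕ, lossVector (bd z) =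
      ((if z 0 + cf 0 = 0 then 0 else 1), a,
        (if z (Fin.last L) + cf (Fin.last L) = 0 then 0 else 1)) := by
    intro z
    rw [hbd]
    simp only
    rw [SB.lossVector_build2 _ _ _ _ (hlast_ofFn z) (hrows z) (hgaps z), hmapfst]
  -- main bijection
  have key : (Finset.piAntidiag F n).card = Fil.card := by
    apply Finset.card_bij (fun z _ => enc z)
    · -- membership
      intro z hz
      rw [Finset.mem_piAntidiag] at hz
      obtain ⟨hzsum, hzsupp⟩ := hz
      have hzuniv : ∑ i, z i = n := by
        rw [← hzsum]
        symm
        apply Finset.sum_subset (Finset.subset_univ F)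
        intro i _ hiF
        by_contra hzi
        exact hiF (hzsupp i hzi)
      have hlen_z : (bd z).length = N := by
        rw [hlenbd z, hzuniv, hcsum]
        omega
      have hofFn : List.ofFn (enc z) = bd z := SB.ofFn_getD N (bd z) false hlen_z
      rw [hFil, Finset.mem_filter]
      refine ⟨Finset.mem_univ _, ?_⟩
      rw [hofFn, hlv_bd z]
      have hz0 : (if z 0 + cf 0 = 0 then 0 else 1) = s := by
        rcases Nat.le_one_iff_eq_zero_or_eq_one.mp hs with hs0 | hs1
        · have h0F : (0 : Fin (L + 1)) ∉ F := by
            rw [hF, Finset.mem_filter]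
            rintro ⟨-, h1, -⟩
            exact absurd (h1 hget0) (by omega)
          have hz00 : z 0 = 0 := by
            by_contra hne
            exact h0F (hzsupp 0 hne)
          rw [hz00, hcf0]
          simp [hs0]
        · rw [hcf0, hs1, if_neg (by omega)]
      have hzL : (if z (Fin.last L) + cf (Fin.last L) = 0 then 0 else 1) = e := by
        rcases Nat.le_one_iff_eq_zero_or_eq_one.mp he with he0 | he1
        · have hLF : (Fin.last L) ∉ F := by
            rw [hF, Finset.mem_filter]
            rintro ⟨-, -, h2⟩
            exact absurd (h2 (Fin.val_last L)) (by omega)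
          have hzL0 : z (Fin.last L) = 0 := by
            by_contra hne
            exact hLF (hzsupp _ hne)
          rw [hzL0, hcflast]
          simp [he0]
        · rw [hcflast, he1, if_neg (by omega)]
      rw [hz0, hzL]
    · -- injectivity
      intro z1 hz1 z2 hz2 hzz
      have hz1' := Finset.mem_piAntidiag.mp hz1
      have hz2' := Finset.mem_piAntidiag.mp hz2
      have hz1u : ∑ i, z1 i = n := by
        rw [← hz1'.1]; symm
        apply Finset.sum_subset (Finset.subset_univ F)
        intro i _ hiF; by_contra hzi; exact hiF (hz1'.2 i hzi)
      have hz2u : ∑ i, z2 i = n := by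
        rw [← hz2'.1]; symm
        apply Finset.sum_subset (Finset.subset_univ F)
        intro i _ hiF; by_contra hzi; exact hiF (hz2'.2 i hzi)
      have hb : bd z1 = bd z2 := by
        rw [← SB.ofFn_getD N (bd z1) false (by rw [hlenbd z1, hz1u, hcsum]; omega),
          ← SB.ofFn_getD N (bd z2) false (by rw [hlenbd z2, hz2u, hcsum]; omega)]
        exact congrArg List.ofFn hzz
      rw [hbd] at hb
      simp only at hb
      obtain ⟨h0, hlist⟩ := SB.build_inj _ _ _ _ (hrows z1) (hrows z2) (hgaps z1) (hgaps z2)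
        (by rw [hmapfst z1, hmapfst z2]) hb
      have hfun := List.ofFn_injective hlist
      funext i
      rcases Fin.eq_zero_or_eq_succ i with rfl | ⟨k, rfl⟩
      · omega
      · have := congrFun hfun k
        have hsnd := congrArg Prod.snd this
        simp only at hsnd
        omega
    · -- surjectivity
      intro f hf
      rw [hFil, Finset.mem_filter] at hf
      have hlv := hf.2
      obtain ⟨g0, t, hr, hg, hlt⟩ := SB.exists_decomp (List.ofFn f)
      have hmap : t.map Prod.fst = a := by
        have h2 : rowLengths (List.ofFn f) = a := congrArg (fun v => v.2.1) hlv
        rw [hlt, SB.rowLengths_build _ _ hr hg] at h2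
        exact h2
      have htlen : t.length = L := by
        have := congrArg List.length hmap
        simpa using this
      have htne : t ≠ [] := by
        intro h; rw [h] at htlen; simp at htlen; omega
      have hlastt : t.getLast? = some (t.getLast htne) := List.getLast?_eq_getLast htne
      have hlv2 := SB.lossVector_build2 g0 t (t.getLast htne).1 (t.getLast htne).2
        (by rw [hlastt]) hr hg
      rw [← hlt, hlv, hmap] at hlv2
      have hs0 : s = (if g0 = 0 then 0 else 1) := congrArg (fun v => v.1) hlv2
      have he0 : e = (if (t.getLast htne).2 = 0 then 0 else 1) := congrArg (fun v => v.2.2) hlv2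
      have hlastget : ∀ m : ℕ, m = L - 1 → t.getD m (0, 0) = t.getLast htne := by
        intro m hm
        have hidx : m = t.length - 1 := by omega
        rw [List.getD_eq_getElem?_getD, hidx, ← List.getLast?_eq_getElem?,
          List.getLast?_eq_getLast htne]
        rfl
      have hs0' : (s = 0 ∧ g0 = 0) ∨ (s = 1 ∧ 1 ≤ g0) := by
        split_ifs at hs0 with h <;> omega
      have he0' : (e = 0 ∧ (t.getLast htne).2 = 0) ∨ (e = 1 ∧ 1 ≤ (t.getLast htne).2) := by
        split_ifs at he0 with h <;> omega
      -- the gap function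
      set G : Fin (L + 1) → ℕ :=
        (fun i => if (i : ℕ) = 0 then g0 else (t.getD ((i : ℕ) - 1) (0, 0)).2) with hG
      have hGc : ∀ i, cf i ≤ G i := by
        intro i
        simp only [hcf, hG]
        by_cases h0 : (i : ℕ) = 0
        · rw [if_pos h0, if_pos h0]
          omega
        · rw [if_neg h0, if_neg h0]
          by_cases hLL : (i : ℕ) = L
          · rw [if_pos hLL, hlastget ((i : ℕ) - 1) (by omega)]
            omega
          · rw [if_neg hLL]
            have hi1 : (i : ℕ) - 1 < L - 1 := by
              have := i.isLt
              omega
            rw [List.getD_eq_getElem _ _ (by omega)]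
            have hmem : t[(i : ℕ) - 1]'(by omega) ∈ t.dropLast := by
              rw [← List.getElem_dropLast (xs := t) (i := (i : ℕ) - 1) (by simp; omega)]
              exact List.getElem_mem _
            exact hg _ hmem
      set z : Fin (L + 1) → ℕ := (fun i => G i - cf i) with hz
      have hzG : ∀ i, z i + cf i = G i := by
        intro i
        have := hGc i
        simp only [hz]
        omega
      have hzsupp : ∀ i, z i ≠ 0 → i ∈ F := by
        intro i hzi
        rw [hF, Finset.mem_filter]
        refine ⟨Finset.mem_univ _, ?_, ?_⟩
        · intro h0
          by_contra hsne
          apply hzi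
          simp only [hz, hG, hcf, if_pos h0]
          omega
        · intro hLL
          by_contra hene
          apply hzi
          have h0 : ¬ ((i : ℕ) = 0) := by omega
          simp only [hz, hG, hcf, if_neg h0, if_pos hLL]
          rw [hlastget ((i : ℕ) - 1) (by omega)]
          omega
      -- sums
      have hsummap : (t.map (fun q : ℕ × ℕ => q.1 + q.2)).sum
          = (t.map Prod.fst).sum + (t.map Prod.snd).sum := SB.sum_map_add t
      have hsnd_sum : ∑ i : Fin L, (t.getD (i : ℕ) (0, 0)).2 = (t.map Prod.snd).sum := by
        have : t.map Prod.snd = List.ofFn (fun i : Fin L => (t.getD (i : ℕ) (0, 0)).2) := by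
          apply List.ext_getElem
          · simp [htlen]
          · intro i h1 h2
            rw [List.getElem_ofFn, List.getElem_map]
            rw [List.getD_eq_getElem _ _ (by simpa using h1)]
        rw [this, List.sum_ofFn]
      have hlenN : (List.ofFn f).length = N := by simp
      have hlenbuild : g0 + (a.sum + (t.map Prod.snd).sum) = N := by
        rw [hlt] at hlenN
        rw [SB.length_build, hsummap, hmap] at hlenN
        omega
      have hGsum : ∑ i, G i = g0 + (t.map Prod.snd).sum := by
        rw [Fin.sum_univ_succ]
        have h1 : G 0 = g0 := by simp [hG]
        have h2 : ∀ i : Fin L, G i.succ = (t.getD (i : ℕ) (0, 0)).2 := by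
          intro i
          simp only [hG, Fin.val_succ]
          rw [if_neg (by omega)]
          congr 1
        rw [h1, Finset.sum_congr rfl (fun i _ => h2 i), hsnd_sum]
      have hzmem : z ∈ Finset.piAntidiag F n := by
        rw [Finset.mem_piAntidiag]
        refine ⟨?_, fun i hi => hzsupp i hi⟩
        have huniv : ∑ i, z i = n := by
          have hdist : ∑ i, z i + ∑ i, cf i = ∑ i, G i := by
            rw [← Finset.sum_add_distrib]
            exact Finset.sum_congr rfl (fun i _ => hzG i)
          rw [hGsum, hcsum] at hdist
          omega
        rw [← huniv]
        apply Finset.sum_subset (Finset.subset_univ F)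
        intro i _ hiF
        by_contra hzi
        exact hiF (hzsupp i hzi)
      refine ⟨z, hzmem, ?_⟩
      -- enc z = f
      have hbdz : bd z = List.ofFn f := by
        rw [hbd]
        simp only
        rw [hlt]
        have h0 : z 0 + cf 0 = g0 := by rw [hzG 0]; simp [hG]
        have hlists : List.ofFn (fun i : Fin L => (a.get i, z i.succ + cf i.succ)) = t := by
          apply List.ext_getElem
          · simp [htlen]
          · intro i h1 h2
            rw [List.getElem_ofFn]
            have hiL : i < L := by rw [List.length_ofFn] at h1; exact h1
            have hia : i < a.length := by omega
            have hfst : a.get ⟨i, hia⟩ = (t[i]'h2).1 := by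
              have h3 : a[i]? = some ((t[i]'h2).1) := by
                conv_lhs => rw [← hmap]
                rw [List.getElem?_map, List.getElem?_eq_getElem h2]
                rfl
              have h4 : a[i]? = some (a[i]'hia) := List.getElem?_eq_getElem hia
              rw [h4] at h3
              rw [List.get_eq_getElem]
              exact Option.some.inj h3
            have hsnd : z (⟨i, hiL⟩ : Fin L).succ + cf (⟨i, hiL⟩ : Fin L).succ
                = (t[i]'h2).2 := by
              rw [hzG]
              simp only [hG, Fin.val_succ, Fin.val_mk]
              rw [if_neg (by omega)]
              have hidx : i + 1 - 1 = i := by omega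
              rw [hidx, List.getD_eq_getElem _ _ (by omega)]
            exact Prod.ext hfst hsnd
        rw [h0, hlists]
      funext i
      rw [henc]
      simp only
      rw [hbdz]
      rw [List.getD_eq_getElem _ _ (by simp), List.getElem_ofFn]
  -- conclude
  have hcount : ∀ f ∈ Fil, (List.ofFn f).count true = a.sum := by
    intro f hf
    rw [hFil, Finset.mem_filter] at hf
    have h2 : rowLengths (List.ofFn f) = a := congrArg (fun v => v.2.1) hf.2
    rw [← SB.sum_rowLengths, h2]
  calc ∑ f ∈ Fil, Q N K p ((List.ofFn f).count true) / ((N.choose ((List.ofFn f).count true)) : ℝ)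
      = ∑ f ∈ Fil, Q N K p a.sum / ((N.choose a.sum) : ℝ) := by
        refine Finset.sum_congr rfl (fun f hf => ?_)
        rw [hcount f hf]
    _ = (Fil.card : ℝ) * (Q N K p a.sum / ((N.choose a.sum) : ℝ)) := by
        rw [Finset.sum_const, nsmul_eq_mul]
    _ = (Nat.multichoose (L + 1 - (1 - s) - (1 - e)) n : ℝ) *
        Q N K p a.sum / ((N.choose a.sum) : ℝ) := by
        rw [← key, SB.card_piAntidiag, hcF]
        have : s + e + (L - 1) = L + 1 - (1 - s) - (1 - e) := by omega
        rw [this]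
        ring
end

section
/- Let i ≥ 1 and let l_1, …, l_i be nonempty lists of Booleans. Then the number of loss rows of the concatenation satisfies runs(l_1 ++ l_2 ++ ⋯ ++ l_i) = Σ_{k=1}^{i} runs(l_k) − Σ_{k=1}^{i−1} [last entry of l_k is true AND first entry of l_{k+1} is true], where the bracket is 1 if the condition holds and 0 otherwise. -/
lemma rowLengthsAux_pos_length (t : List Bool) : ∀ m n,
    (rowLengthsAux t (m+1)).length = (rowLengthsAux t (n+1)).length := by
  induction t with
  | nil => intro m n; simp [rowLengthsAux]
  | cons x t ih =>
    intro m n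
    cases x
    · simp [rowLengthsAux]
    · simpa [rowLengthsAux] using ih (m+1) (n+1)

lemma key (b : List Bool) : ∀ (a : List Bool) (n : ℕ),
    (rowLengthsAux (a ++ b) n).length +
      (if a.getLastD (decide (0 < n)) = true ∧ b.head? = some true then 1 else 0) =
    (rowLengthsAux a n).length + (rowLengthsAux b 0).length := by
  intro a
  induction a with
  | nil =>
    intro n
    cases n with
    | zero => simp [rowLengthsAux]
    | succ n =>
      cases b with
      | nil => simp [rowLengthsAux]
      | cons x t =>
        cases x
        · simp [rowLengthsAux]; omega
        · have h := rowLengthsAux_pos_length t (n+1) 0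
          simp only [Nat.zero_add] at h
          simp [rowLengthsAux]
          omega
  | cons x a ih =>
    intro n
    cases x
    · have h0 := ih 0
      rw [(by decide : decide (0<0) = false)] at h0
      simp only [List.getLastD_cons]
      cases n with
      | zero => simpa [rowLengthsAux] using h0
      | succ n =>
        simp only [List.cons_append, rowLengthsAux, List.length_cons, List.append_eq]
        omega
    · have h1 := ih (n+1)
      rw [(by simp : decide (0<n+1) = true)] at h1
      simp only [List.getLastD_cons]
      simp only [List.cons_append, rowLengthsAux]
      simpa using h1

lemma runs_append (a b : List Bool) :
    runs (a ++ b) + (if a.getLast? = some true ∧ b.head? = some true then 1 else 0) =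
    runs a + runs b := by
  have h := key b a 0
  rw [(by decide : decide (0<0) = false)] at h
  have hiff : (a.getLast?.getD false = true) ↔ (a.getLast? = some true) := by
    cases h : a.getLast? <;> simp
  simpa [runs, rowLengths, hiff] using h

lemma flatten_head? (L : List (List Bool)) (hne : ∀ l ∈ L, l ≠ []) (hL : L ≠ []) :
    L.flatten.head? = (L.getD 0 []).head? := by
  cases L with
  | nil => exact absurd rfl hL
  | cons a L =>
    have ha : a ≠ [] := hne a (by simp)
    cases a with
    | nil => exact absurd rfl ha
    | cons x t => simp

lemma main_list : ∀ (L : List (List Bool)), L ≠ [] → (∀ l ∈ L, l ≠ []) →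
    (runs L.flatten : ℤ) =
      (∑ k ∈ Finset.range L.length, (runs (L.getD k []) : ℤ)) -
        ∑ k ∈ Finset.range (L.length - 1),
          (if (L.getD k []).getLast? = some true ∧ (L.getD (k + 1) []).head? = some true
            then (1 : ℤ) else 0) := by
  intro L
  induction L with
  | nil => intro h; exact absurd rfl h
  | cons a L ih =>
    intro _ hne
    cases L with
    | nil => simp
    | cons b M =>
      have hne' : ∀ l ∈ b :: M, l ≠ [] := fun l hl => hne l (List.mem_cons_of_mem a hl)
      have hmain := ih (by simp) hne'
      set F := (b :: M).flatten with hF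
      have hh : F.head? = b.head? := by
        have := flatten_head? (b :: M) hne' (by simp)
        simpa [hF] using this
      have hcast : (runs (a ++ F) : ℤ) = (runs a : ℤ) + (runs F : ℤ) -
          (if a.getLast? = some true ∧ b.head? = some true then (1:ℤ) else 0) := by
        have hr := runs_append a F
        rw [hh] at hr
        by_cases hcc : a.getLast? = some true ∧ b.head? = some true
        · rw [if_pos hcc] at hr ⊢; omega
        · rw [if_neg hcc] at hr ⊢; omega
      have s1 : ∑ k ∈ Finset.range (M.length + 1 + 1), (runs ((a::b::M).getD k []) : ℤ)
          = (runs a : ℤ) + ∑ k ∈ Finset.range (M.length + 1), (runs ((b::M).getD k []) : ℤ) := by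
        rw [Finset.sum_range_succ']
        simp only [List.getD_cons_succ, List.getD_cons_zero]
        exact add_comm _ _
      have s2 : ∑ k ∈ Finset.range (M.length + 1),
            (if ((a::b::M).getD k []).getLast? = some true ∧
                ((a::b::M).getD (k+1) []).head? = some true then (1:ℤ) else 0)
          = (if a.getLast? = some true ∧ b.head? = some true then (1:ℤ) else 0)
            + ∑ k ∈ Finset.range M.length,
                (if ((b::M).getD k []).getLast? = some true ∧
                    ((b::M).getD (k+1) []).head? = some true then (1:ℤ) else 0) := by
        rw [Finset.sum_range_succ']
        simp only [List.getD_cons_succ, List.getD_cons_zero]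
        exact add_comm _ _
      simp only [List.length_cons, Nat.add_sub_cancel] at hmain ⊢
      have hflat : (a :: b :: M).flatten = a ++ F := rfl
      rw [hflat, s1, s2, hcast, hmain]
      ring

theorem stmt_10 (i : ℕ) (hi : 1 ≤ i) (L : List (List Bool)) (hlen : L.length = i)
    (hne : ∀ l ∈ L, l ≠ []) :
    (runs L.flatten : ℤ) =
      (∑ k ∈ Finset.range i, (runs (L.getD k []) : ℤ)) -
        ∑ k ∈ Finset.range (i - 1),
          (if (L.getD k []).getLast? = some true ∧ (L.getD (k + 1) []).head? = some true
            then (1 : ℤ) else 0) := by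
  subst hlen
  exact main_list L (List.ne_nil_of_length_pos hi) hne
end
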